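/- Let 0 < x ≤ 1 and y > 0 be real. Then for every t ∈ (0,1], Im √(1 − 1/(x + i t y)) > 0, where √ denotes the principal branch of the complex square root. Consequently G(x,y) < 0, where G(x,y) = −∫₀¹ y²·√(1−t²)·Im √(1 − 1/(x + i t y)) dt. -/

import Mathlib

open Complex

set_option maxHeartbeats 1000000

/-- If `0 < w.im`, then the principal square root of `w` has positive imaginary part. -/
lemma im_cpow_half_pos {w : ℂ} (hw : 0 < w.im) : 0 < (w ^ (1/2 : ℂ)).im := by
  have hw0 : w ≠ 0 := by
    intro h; rw [h] at hw; simp at hw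
  have harg_pos : 0 < w.arg := by
    rcases lt_or_eq_of_le (Complex.arg_nonneg_iff.mpr hw.le) with h | h
    · exact h
    · exact absurd (Complex.arg_eq_zero_iff.mp h.symm).2 hw.ne'
  have harg_lt : w.arg < Real.pi := Complex.arg_lt_pi_iff.mpr (Or.inr hw.ne')
  rw [Complex.cpow_def_of_ne_zero hw0, Complex.exp_im]
  have him : (Complex.log w * (1/2 : ℂ)).im = w.arg / 2 := by
    simp [Complex.mul_im, Complex.log_im]
    ring
  rw [him]
  apply mul_pos (Real.exp_pos _)
  apply Real.sin_pos_of_pos_of_lt_pi (by linarith)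
  linarith [Real.pi_pos]

/-- For `0 < x ≤ 1` and `y > 0`, `Im √(1 - 1/(x + ity)) > 0` for every `t ∈ (0,1]`
(principal complex square root); consequently `G(x,y) < 0`. -/
theorem stmt_6 (x y : ℝ) (hx0 : 0 < x) (hx1 : x ≤ 1) (hy : 0 < y) :
    (∀ t ∈ Set.Ioc (0 : ℝ) 1,
      0 < (((1 : ℂ) - 1 / ((x : ℂ) + (t : ℂ) * (y : ℂ) * Complex.I)) ^ (1/2 : ℂ)).im)
    ∧ (-(∫ t in (0 : ℝ)..1, y ^ 2 * Real.sqrt (1 - t ^ 2) *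
          (((1 : ℂ) - 1 / ((x : ℂ) + (t : ℂ) * (y : ℂ) * Complex.I)) ^ (1/2 : ℂ)).im)) < 0 := by
  have hzre : ∀ t : ℝ, ((x : ℂ) + (t : ℂ) * (y : ℂ) * Complex.I).re = x := by
    intro t; simp
  have hzim : ∀ t : ℝ, ((x : ℂ) + (t : ℂ) * (y : ℂ) * Complex.I).im = t * y := by
    intro t; simp
  have hzne : ∀ t : ℝ, ((x : ℂ) + (t : ℂ) * (y : ℂ) * Complex.I) ≠ 0 := by
    intro t h
    have h2 : ((x : ℂ) + (t : ℂ) * (y : ℂ) * Complex.I).re = 0 := by rw [h]; simp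
    rw [hzre] at h2; exact hx0.ne' h2
  have hwim : ∀ t : ℝ, 0 < t →
      0 < ((1 : ℂ) - 1 / ((x : ℂ) + (t : ℂ) * (y : ℂ) * Complex.I)).im := by
    intro t ht
    have h1 : ((1 : ℂ) - 1 / ((x : ℂ) + (t : ℂ) * (y : ℂ) * Complex.I)).im
        = ((x : ℂ) + (t : ℂ) * (y : ℂ) * Complex.I).im
          / Complex.normSq ((x : ℂ) + (t : ℂ) * (y : ℂ) * Complex.I) := by
      rw [Complex.sub_im, Complex.one_im, one_div, Complex.inv_im]; ring
    have hns : 0 < Complex.normSq ((x : ℂ) + (t : ℂ) * (y : ℂ) * Complex.I) :=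
      Complex.normSq_pos.mpr (hzne t)
    rw [h1, hzim]
    exact div_pos (mul_pos ht hy) hns
  have key : ∀ t ∈ Set.Ioc (0 : ℝ) 1,
      0 < (((1 : ℂ) - 1 / ((x : ℂ) + (t : ℂ) * (y : ℂ) * Complex.I)) ^ (1/2 : ℂ)).im := by
    intro t ht
    exact im_cpow_half_pos (hwim t ht.1)
  refine ⟨key, ?_⟩
  rw [neg_lt_zero]
  -- continuity on Ioc 0 1
  have hwcont : Continuous (fun t : ℝ => (1 : ℂ) - 1 / ((x : ℂ) + (t : ℂ) * (y : ℂ) * Complex.I)) := by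
    apply Continuous.sub continuous_const
    apply Continuous.div continuous_const
    · exact continuous_const.add ((Complex.continuous_ofReal.mul continuous_const).mul
        continuous_const)
    · exact hzne
  have hfcont : ContinuousOn (fun t : ℝ => y ^ 2 * Real.sqrt (1 - t ^ 2) *
      (((1 : ℂ) - 1 / ((x : ℂ) + (t : ℂ) * (y : ℂ) * Complex.I)) ^ (1/2 : ℂ)).im)
      (Set.Ioc (0:ℝ) 1) := by
    apply ContinuousOn.mul
    · exact continuousOn_const.mul ((continuous_const.sub (continuous_pow 2)).continuousOn.sqrt)
    · have hco : ContinuousOn (fun t : ℝ =>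
          ((1 : ℂ) - 1 / ((x : ℂ) + (t : ℂ) * (y : ℂ) * Complex.I)) ^ (1/2 : ℂ))
          (Set.Ioc (0:ℝ) 1) := by
        intro t ht
        exact (hwcont.continuousAt.cpow continuousAt_const
          (Complex.mem_slitPlane_iff.mpr (Or.inr (hwim t ht.1).ne'))).continuousWithinAt
      exact Complex.continuous_im.comp_continuousOn hco
  -- uniform bound on Ioc 0 1
  have hbound : ∀ t ∈ Set.Ioc (0:ℝ) 1,
      ‖y ^ 2 * Real.sqrt (1 - t ^ 2) *
        (((1 : ℂ) - 1 / ((x : ℂ) + (t : ℂ) * (y : ℂ) * Complex.I)) ^ (1/2 : ℂ)).im‖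
      ≤ y ^ 2 * (1 + 1/x) := by
    intro t ht
    have h1 : Real.sqrt (1 - t ^ 2) ≤ 1 := by
      calc Real.sqrt (1 - t ^ 2) ≤ Real.sqrt 1 :=
            Real.sqrt_le_sqrt (by nlinarith [ht.1.le, ht.2])
        _ = 1 := Real.sqrt_one
    have h1' : 0 ≤ Real.sqrt (1 - t ^ 2) := Real.sqrt_nonneg _
    have hxle : x ≤ ‖((x : ℂ) + (t : ℂ) * (y : ℂ) * Complex.I)‖ := by
      calc x = ((x : ℂ) + (t : ℂ) * (y : ℂ) * Complex.I).re := (hzre t).symm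
        _ ≤ |((x : ℂ) + (t : ℂ) * (y : ℂ) * Complex.I).re| := le_abs_self _
        _ ≤ ‖((x : ℂ) + (t : ℂ) * (y : ℂ) * Complex.I)‖ := Complex.abs_re_le_norm _
    have habs : ‖((1 : ℂ) - 1 / ((x : ℂ) + (t : ℂ) * (y : ℂ) * Complex.I))‖
        ≤ 1 + 1/x := by
      have htr := norm_sub_le (1:ℂ) (1 / ((x : ℂ) + (t : ℂ) * (y : ℂ) * Complex.I))
      simp only [norm_one, norm_div] at htr
      have h3 : 1 / ‖((x : ℂ) + (t : ℂ) * (y : ℂ) * Complex.I)‖ ≤ 1/x :=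
        one_div_le_one_div_of_le hx0 hxle
      calc ‖((1 : ℂ) - 1 / ((x : ℂ) + (t : ℂ) * (y : ℂ) * Complex.I))‖
          ≤ 1 + 1 / ‖((x : ℂ) + (t : ℂ) * (y : ℂ) * Complex.I)‖ := by
            simpa [one_div] using htr
        _ ≤ 1 + 1/x := by linarith
    have hb1 : (1:ℝ) ≤ 1 + 1/x := by
      have : 0 < 1/x := by positivity
      linarith
    have hwne : ((1 : ℂ) - 1 / ((x : ℂ) + (t : ℂ) * (y : ℂ) * Complex.I)) ≠ 0 := by
      intro h; have h2 := hwim t ht.1; rw [h] at h2; simp at h2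
    have h2 : |(((1 : ℂ) - 1 / ((x : ℂ) + (t : ℂ) * (y : ℂ) * Complex.I)) ^ (1/2 : ℂ)).im|
        ≤ 1 + 1/x := by
      calc |(((1 : ℂ) - 1 / ((x : ℂ) + (t : ℂ) * (y : ℂ) * Complex.I)) ^ (1/2 : ℂ)).im|
          ≤ ‖(((1 : ℂ) - 1 / ((x : ℂ) + (t : ℂ) * (y : ℂ) * Complex.I)) ^ (1/2 : ℂ))‖ :=
            Complex.abs_im_le_norm _
        _ = ‖((1 : ℂ) - 1 / ((x : ℂ) + (t : ℂ) * (y : ℂ) * Complex.I))‖ ^ ((1:ℝ)/2) := by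
            rw [Complex.norm_cpow_of_ne_zero hwne]
            simp
        _ ≤ (1 + 1/x) ^ ((1:ℝ)/2) :=
            Real.rpow_le_rpow (norm_nonneg _) habs (by norm_num)
        _ ≤ (1 + 1/x) ^ (1:ℝ) :=
            Real.rpow_le_rpow_of_exponent_le hb1 (by norm_num)
        _ = 1 + 1/x := Real.rpow_one _
    rw [Real.norm_eq_abs, abs_mul, abs_mul, _root_.abs_of_nonneg (by positivity : (0:ℝ) ≤ y^2),
      _root_.abs_of_nonneg h1']
    calc y ^ 2 * Real.sqrt (1 - t ^ 2) *
          |(((1 : ℂ) - 1 / ((x : ℂ) + (t : ℂ) * (y : ℂ) * Complex.I)) ^ (1/2 : ℂ)).im|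
        ≤ y ^ 2 * 1 * (1 + 1/x) := by
          apply mul_le_mul _ h2 (abs_nonneg _) (by positivity)
          exact mul_le_mul_of_nonneg_left h1 (by positivity)
      _ = y ^ 2 * (1 + 1/x) := by ring
  -- integrability
  have hfi : IntervalIntegrable (fun t : ℝ => y ^ 2 * Real.sqrt (1 - t ^ 2) *
      (((1 : ℂ) - 1 / ((x : ℂ) + (t : ℂ) * (y : ℂ) * Complex.I)) ^ (1/2 : ℂ)).im)
      MeasureTheory.volume 0 1 := by
    apply IntervalIntegrable.mono_fun' (g := fun _ => y ^ 2 * (1 + 1/x))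
      intervalIntegrable_const
    · rw [Set.uIoc_of_le (by norm_num : (0:ℝ) ≤ 1)]
      exact hfcont.aestronglyMeasurable measurableSet_Ioc
    · rw [Set.uIoc_of_le (by norm_num : (0:ℝ) ≤ 1)]
      exact (MeasureTheory.ae_restrict_iff' measurableSet_Ioc).mpr
        (MeasureTheory.ae_of_all _ hbound)
  apply intervalIntegral.intervalIntegral_pos_of_pos_on hfi _ (by norm_num)
  intro t ht
  have h1 : 0 < Real.sqrt (1 - t ^ 2) := by
    apply Real.sqrt_pos.mpr; nlinarith [ht.1, ht.2]
  have h2 := key t ⟨ht.1, ht.2.le⟩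
  have h3 : (0:ℝ) < y ^ 2 := by positivity
  exact mul_pos (mul_pos h3 h1) h2
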